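/- Let K₀ = max{1, 2(9+ε)/r}. For every constant c > 0 there exists a constant K₁ > 0 such that, for all sufficiently large n, the following holds: for every positive integer T ≤ K₀·ln n, if Z₁, …, Z_T are independent random variables with Z_t distributed Binomial(n, p(t)) where p(t) = 1 − (1−p₂)(1−p₃)^t, then P(Z₁ + Z₂ + ⋯ + Z_T > K₁·ln n) ≤ n^{−c}. -/

import Mathlib

open MeasureTheory Real

/-- The binomial distribution with `N` trials and success probability `p`, as a
measure on `ℕ`. -/
noncomputable def binomialMeasure (N : ℕ) (p : ℝ) : Measure ℕ :=
  ∑ k ∈ Finset.range (N + 1),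
    (ENNReal.ofReal ((N.choose k : ℝ) * p ^ k * (1 - p) ^ (N - k))) • Measure.dirac k

/-- The constant `K₀ = max {1, 2(9+ε)/r}`. -/
noncomputable def K0 (ε r : ℝ) : ℝ := max 1 (2 * (9 + ε) / r)

/-- The edge-hitting probability `p(t) = 1 - (1-p₂)(1-p₃)^t` with `p₂ = (1-ε)/n`
and `p₃ = r/(n ln n)`. -/
noncomputable def pfun (n : ℕ) (ε r : ℝ) (t : ℕ) : ℝ :=
  1 - (1 - (1 - ε) / n) * (1 - r / (n * Real.log n)) ^ t

lemma binom_integrable (n : ℕ) (p : ℝ) (f : ℕ → ℝ) :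
    Integrable f (binomialMeasure n p) := by
  rw [binomialMeasure, integrable_finset_sum_measure]
  intro k _
  exact ((integrable_const (f k)).congr (ae_eq_dirac f).symm).smul_measure ENNReal.ofReal_ne_top

lemma binom_integral (n : ℕ) (p : ℝ) (hp0 : 0 ≤ p) (hp1 : p ≤ 1) (f : ℕ → ℝ) :
    ∫ k, f k ∂(binomialMeasure n p)
      = ∑ k ∈ Finset.range (n + 1), (n.choose k : ℝ) * p ^ k * (1 - p) ^ (n - k) * f k := by
  rw [binomialMeasure, integral_finset_sum_measure (fun k _ =>
    ((integrable_const (f k)).congr (ae_eq_dirac f).symm).smul_measure ENNReal.ofReal_ne_top)]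
  refine Finset.sum_congr rfl fun k _ => ?_
  rw [integral_smul_measure, integral_dirac, ENNReal.toReal_ofReal
    (mul_nonneg (mul_nonneg (Nat.cast_nonneg _) (pow_nonneg hp0 _)) (pow_nonneg (by linarith) _)),
    smul_eq_mul]

lemma binom_exp (n : ℕ) (p : ℝ) (hp0 : 0 ≤ p) (hp1 : p ≤ 1) :
    ∫ k, Real.exp (1 * (k : ℝ)) ∂(binomialMeasure n p) = (1 + p * (Real.exp 1 - 1)) ^ n := by
  rw [binom_integral n p hp0 hp1]
  have h : (1 + p * (Real.exp 1 - 1)) = (p * Real.exp 1 + (1 - p)) := by ring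
  rw [h, add_pow]
  refine Finset.sum_congr rfl fun k hk => ?_
  have hk' : exp (1 * (k : ℝ)) = exp 1 ^ k := by rw [mul_comm, Real.exp_nat_mul]
  rw [hk', mul_pow]; ring

lemma pfun_bounds (n : ℕ) (ε r : ℝ) (hε0 : 0 < ε) (hε1 : ε < 1) (hr : 0 < r)
    (hn0 : 0 < (n : ℝ)) (hlog1 : 1 ≤ Real.log n) (hnr : r ≤ (n : ℝ)) (m : ℕ) :
    0 ≤ pfun n ε r m ∧ pfun n ε r m ≤ 1 ∧
      (n : ℝ) * pfun n ε r m ≤ (1 - ε) + (m : ℝ) * (r / Real.log n) := by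
  have hn1 : (1 : ℝ) ≤ (n : ℝ) := by exact_mod_cast Nat.cast_pos.mp hn0
  have hlog0 : (0 : ℝ) < Real.log n := lt_of_lt_of_le one_pos hlog1
  set a : ℝ := (1 - ε) / n with ha
  set b : ℝ := r / (n * Real.log n) with hb'
  have ha0 : 0 ≤ a := div_nonneg (by linarith) hn0.le
  have ha1 : a ≤ 1 := by rw [ha, div_le_one hn0]; linarith
  have hb0 : 0 ≤ b := div_nonneg hr.le (by positivity)
  have hb1 : b ≤ 1 := by
    rw [hb', div_le_one (by positivity)]
    calc r ≤ (n : ℝ) := hnr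
    _ ≤ (n : ℝ) * Real.log n := le_mul_of_one_le_right hn0.le hlog1
  have hpow0 : 0 ≤ (1 - b) ^ m := pow_nonneg (by linarith) m
  have hpow1 : (1 - b) ^ m ≤ 1 := pow_le_one₀ (by linarith) (by linarith)
  have hbern : 1 - (m : ℝ) * b ≤ (1 - b) ^ m := by
    have h := one_add_mul_le_pow (a := -b) (by linarith) m
    have h2 : (1 + -b) ^ m = (1 - b) ^ m := by ring_nf
    linarith [h2 ▸ h]
  have hpf : pfun n ε r m = 1 - (1 - a) * (1 - b) ^ m := rfl
  have hple : pfun n ε r m ≤ a + (m : ℝ) * b := by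
    have h1 : (1 - a) * (1 - (m : ℝ) * b) ≤ (1 - a) * (1 - b) ^ m :=
      mul_le_mul_of_nonneg_left hbern (by linarith)
    have h2 : 1 - a - (m : ℝ) * b ≤ (1 - a) * (1 - (m : ℝ) * b) := by nlinarith
    rw [hpf]; nlinarith
  refine ⟨?_, ?_, ?_⟩
  · rw [hpf]; nlinarith [mul_le_one₀ ha1 hpow0 hpow1]
  · rw [hpf]; nlinarith [mul_nonneg (by linarith : (0:ℝ) ≤ 1 - a) hpow0]
  · have hab : (n : ℝ) * (a + (m : ℝ) * b) = (1 - ε) + (m : ℝ) * (r / Real.log n) := by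
      rw [ha, hb']; field_simp
    calc (n : ℝ) * pfun n ε r m ≤ (n : ℝ) * (a + (m : ℝ) * b) :=
          mul_le_mul_of_nonneg_left hple hn0.le
    _ = _ := hab

/-- Tail bound for a sum of independent binomials `Z_t ~ Bin(n, p(t))`, `1 ≤ t ≤ T`,
with `T ≤ K₀ ln n`: for every `c > 0` there is `K₁ > 0` such that for all large `n`,
`P(Z₁ + ⋯ + Z_T > K₁ ln n) ≤ n^{-c}`.  (Here `Z i` is the variable `Z_{i+1}`.) -/
theorem sum_binomial_tail_bound (ε r : ℝ) (hε0 : 0 < ε) (hε1 : ε < 1) (hr : 0 < r) :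
    ∀ c > (0 : ℝ), ∃ K₁ > (0 : ℝ), ∃ N : ℕ, ∀ n ≥ N, ∀ T : ℕ, 1 ≤ T →
      (T : ℝ) ≤ K0 ε r * Real.log n →
      ∀ (Ω : Type) (_ : MeasurableSpace Ω) (μ : Measure Ω),
        IsProbabilityMeasure μ →
        ∀ Z : Fin T → Ω → ℕ, (∀ t, Measurable (Z t)) →
          ProbabilityTheory.iIndepFun Z μ →
          (∀ t : Fin T, Measure.map (Z t) μ = binomialMeasure n (pfun n ε r (t + 1))) →
          μ {ω | K₁ * Real.log n < ((∑ t, Z t ω : ℕ) : ℝ)} ≤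
            ENNReal.ofReal ((n : ℝ) ^ (-c)) := by
  intro c hc
  have hK1 : (1 : ℝ) ≤ K0 ε r := le_max_left _ _
  have hKpos : (0 : ℝ) < K0 ε r := lt_of_lt_of_le one_pos hK1
  have hexp1 : (2 : ℝ) ≤ Real.exp 1 := by have := Real.add_one_le_exp (1:ℝ); linarith
  set B : ℝ := (1 + K0 ε r * r) * (Real.exp 1 - 1) with hB
  have hBpos : 0 < B := mul_pos (by positivity) (by linarith)
  refine ⟨c + K0 ε r * B, add_pos hc (mul_pos hKpos hBpos), max 3 ⌈r⌉₊, ?_⟩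
  intro n hn T hT1 hTK Ω mΩ μ hμ Z hZm hInd hlaw
  have hn3 : (3 : ℕ) ≤ n := le_trans (le_max_left _ _) hn
  have hnr : r ≤ (n : ℝ) := by
    calc r ≤ (⌈r⌉₊ : ℝ) := Nat.le_ceil r
    _ ≤ (n : ℝ) := by exact_mod_cast le_trans (le_max_right _ _) hn
  have hn0 : (0 : ℝ) < n := by exact_mod_cast lt_of_lt_of_le (by norm_num) hn3
  have hlog1 : (1 : ℝ) ≤ Real.log n := by
    rw [Real.le_log_iff_exp_le hn0]
    calc Real.exp 1 ≤ 2.7182818286 := Real.exp_one_lt_d9.le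
    _ ≤ (3 : ℝ) := by norm_num
    _ ≤ (n : ℝ) := by exact_mod_cast hn3
  have hlog0 : (0 : ℝ) < Real.log n := lt_of_lt_of_le one_pos hlog1
  -- real-valued versions
  set X : Fin T → Ω → ℝ := fun t ω => ((Z t ω : ℕ) : ℝ) with hX
  have hXm : ∀ t, Measurable (X t) := fun t => measurable_from_top.comp (hZm t)
  have hIndX : ProbabilityTheory.iIndepFun X μ :=
    hInd.comp (fun _ (k : ℕ) => (k : ℝ)) (fun _ => measurable_from_top)
  -- per-variable mgf computation and integrability
  have hmgf : ∀ t : Fin T,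
      ProbabilityTheory.mgf (X t) μ 1 = (1 + pfun n ε r (t + 1) * (Real.exp 1 - 1)) ^ n ∧
      Integrable (fun ω => Real.exp (1 * X t ω)) μ := by
    intro t
    obtain ⟨hp0, hp1, _⟩ := pfun_bounds n ε r hε0 hε1 hr hn0 hlog1 hnr (t + 1)
    have hmeasg : Measurable (fun k : ℕ => Real.exp (1 * (k : ℝ))) := measurable_from_top
    have hmap : ∫ k, Real.exp (1 * (k : ℝ)) ∂(Measure.map (Z t) μ)
        = ∫ ω, Real.exp (1 * X t ω) ∂μ :=
      integral_map (hZm t).aemeasurable hmeasg.aestronglyMeasurable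
    constructor
    · have hdef : ProbabilityTheory.mgf (X t) μ 1 = ∫ ω, Real.exp (1 * X t ω) ∂μ := rfl
      rw [hdef, ← hmap, hlaw t, binom_exp n _ hp0 hp1]
    · have hint : Integrable (fun k : ℕ => Real.exp (1 * (k : ℝ))) (Measure.map (Z t) μ) := by
        rw [hlaw t]; exact binom_integrable n _ _
      exact (integrable_map_measure hmeasg.aestronglyMeasurable (hZm t).aemeasurable).mp hint
  -- mgf of the sum
  have hintS : Integrable (fun ω => Real.exp (1 * (∑ i, X i) ω)) μ :=
    hIndX.integrable_exp_mul_sum hXm (fun i _ => (hmgf i).2)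
  have hcher := ProbabilityTheory.measure_ge_le_exp_mul_mgf (X := ∑ i, X i) (μ := μ)
    ((c + K0 ε r * B) * Real.log n) zero_le_one hintS
  have hmgfle : ProbabilityTheory.mgf (∑ i, X i) μ 1 ≤ Real.exp (B * (K0 ε r * Real.log n)) := by
    rw [hIndX.mgf_sum hXm Finset.univ]
    calc ∏ i, ProbabilityTheory.mgf (X i) μ 1 ≤ ∏ _i : Fin T, Real.exp B := by
          refine Finset.prod_le_prod (fun i _ => ProbabilityTheory.mgf_nonneg) (fun i _ => ?_)
          rw [(hmgf i).1]
          obtain ⟨hp0, hp1, hnp⟩ := pfun_bounds n ε r hε0 hε1 hr hn0 hlog1 hnr (i + 1)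
          have hmi : ((i : ℕ) + 1 : ℝ) ≤ (T : ℝ) := by exact_mod_cast i.2
          have hnp2 : (n : ℝ) * pfun n ε r (i + 1) ≤ 1 + K0 ε r * r := by
            have h4 : ((i : ℕ) + 1 : ℝ) * (r / Real.log n) ≤ K0 ε r * r := by
              have h5 : ((i : ℕ) + 1 : ℝ) / Real.log n ≤ K0 ε r := by
                rw [div_le_iff₀ hlog0]
                calc ((i : ℕ) + 1 : ℝ) ≤ (T : ℝ) := hmi
                _ ≤ K0 ε r * Real.log n := hTK
              calc ((i : ℕ) + 1 : ℝ) * (r / Real.log n)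
                  = (((i : ℕ) + 1 : ℝ) / Real.log n) * r := by ring
              _ ≤ K0 ε r * r := mul_le_mul_of_nonneg_right h5 hr.le
            have := hnp
            push_cast at this ⊢
            linarith
          have hbase : (0:ℝ) ≤ 1 + pfun n ε r (i + 1) * (Real.exp 1 - 1) := by nlinarith
          calc (1 + pfun n ε r (i + 1) * (Real.exp 1 - 1)) ^ n
              ≤ (Real.exp (pfun n ε r (i + 1) * (Real.exp 1 - 1))) ^ n := by
                refine pow_le_pow_left₀ hbase ?_ n
                linarith [Real.add_one_le_exp (pfun n ε r (i + 1) * (Real.exp 1 - 1))]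
          _ = Real.exp ((n : ℝ) * (pfun n ε r (i + 1) * (Real.exp 1 - 1))) := by
                rw [Real.exp_nat_mul]
          _ ≤ Real.exp B := by
                rw [Real.exp_le_exp, hB]
                nlinarith
    _ = Real.exp B ^ T := by rw [Finset.prod_const, Finset.card_univ, Fintype.card_fin]
    _ = Real.exp ((T : ℝ) * B) := by rw [Real.exp_nat_mul]
    _ ≤ Real.exp (B * (K0 ε r * Real.log n)) := by
        rw [Real.exp_le_exp]
        calc (T : ℝ) * B ≤ (K0 ε r * Real.log n) * B :=
              mul_le_mul_of_nonneg_right hTK hBpos.le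
        _ = B * (K0 ε r * Real.log n) := by ring
  have hfinal : Real.exp (-1 * ((c + K0 ε r * B) * Real.log n)) *
      ProbabilityTheory.mgf (∑ i, X i) μ 1 ≤ (n : ℝ) ^ (-c) := by
    have h1 := mul_le_mul_of_nonneg_left hmgfle (Real.exp_pos (-1 * ((c + K0 ε r * B) * Real.log n))).le
    have h2 : Real.exp (-1 * ((c + K0 ε r * B) * Real.log n)) *
        Real.exp (B * (K0 ε r * Real.log n)) = Real.exp (Real.log n * (-c)) := by
      rw [← Real.exp_add]; ring_nf
    rw [Real.rpow_def_of_pos hn0]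
    linarith [h2 ▸ h1]
  have hsub : {ω | (c + K0 ε r * B) * Real.log n < ((∑ t, Z t ω : ℕ) : ℝ)} ⊆
      {ω | (c + K0 ε r * B) * Real.log n ≤ (∑ i, X i) ω} := by
    intro ω hω
    have hcast : ((∑ t, Z t ω : ℕ) : ℝ) = (∑ i, X i) ω := by
      simp only [Finset.sum_apply, hX, Nat.cast_sum]
    simp only [Set.mem_setOf_eq] at hω ⊢
    rw [← hcast]
    exact hω.le
  calc μ {ω | (c + K0 ε r * B) * Real.log n < ((∑ t, Z t ω : ℕ) : ℝ)}
      ≤ μ {ω | (c + K0 ε r * B) * Real.log n ≤ (∑ i, X i) ω} := measure_mono hsub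
  _ = ENNReal.ofReal ((μ {ω | (c + K0 ε r * B) * Real.log n ≤ (∑ i, X i) ω}).toReal) :=
      (ENNReal.ofReal_toReal (measure_ne_top μ _)).symm
  _ ≤ ENNReal.ofReal ((n : ℝ) ^ (-c)) :=
      ENNReal.ofReal_le_ofReal (hcher.trans hfinal)
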